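/- For every k ≥ 3, the complement of the cycle C_{2k−1} is a k-vertex-critical (P_3 + P_1)-free graph on 2k − 1 vertices. -/

import Mathlib

open SimpleGraph

/-- `G` is `k`-vertex-critical: `χ(G) = k` and deleting any vertex decreases `χ`. -/
def IsKVertexCritical {V : Type*} (G : SimpleGraph V) (k : ℕ) : Prop :=
  G.chromaticNumber = k ∧ ∀ v : V, (G.induce ({v}ᶜ : Set V)).chromaticNumber < k

/-- `G` has no induced subgraph isomorphic to `H`. -/
def InducedFree {V W : Type*} (G : SimpleGraph V) (H : SimpleGraph W) : Prop :=
  ∀ s : Set V, IsEmpty (G.induce s ≃g H)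

/-- `s` is an independent set of `G`. -/
def IsIndepSet {V : Type*} (G : SimpleGraph V) (s : Set V) : Prop :=
  s.Pairwise fun a b => ¬ G.Adj a b

/-- The graph `P_2 + ℓ P_1`: an edge together with `ℓ` isolated vertices. -/
def P2lP1 (ℓ : ℕ) : SimpleGraph (Fin (ℓ + 2)) := fromEdgeSet {s(0, 1)}

/-- The graph `P_3 + P_1`: a path on three vertices plus an isolated vertex. -/
def P3P1 : SimpleGraph (Fin 4) := fromEdgeSet {s(0, 1), s(1, 2)}

/-- The paw: a triangle with a pendant vertex. -/
def paw : SimpleGraph (Fin 4) := fromEdgeSet {s(0, 1), s(0, 2), s(1, 2), s(2, 3)}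

/-- The join of two graphs: all edges between the two sides are added. -/
def joinG {α β : Type*} (G : SimpleGraph α) (H : SimpleGraph β) : SimpleGraph (α ⊕ β) where
  Adj x y :=
    match x, y with
    | Sum.inl a, Sum.inl b => G.Adj a b
    | Sum.inr a, Sum.inr b => H.Adj a b
    | Sum.inl _, Sum.inr _ => True
    | Sum.inr _, Sum.inl _ => True
  symm := ⟨by
    rintro (a | a) (b | b) h
    · exact G.adj_symm h
    · trivial
    · trivial
    · exact H.adj_symm h⟩
  loopless := ⟨by
    rintro (a | a) h
    · exact G.loopless.irrefl a h
    · exact H.loopless.irrefl a h⟩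

private lemma mod_helper (n a b : ℕ) (ha : a < n) (hb : b < n) :
    ((n - b) + a) % n = if b ≤ a then a - b else a + n - b := by
  rcases le_or_gt b a with h | h
  · rw [if_pos h, show (n - b) + a = (a - b) + n by omega, Nat.add_mod_right,
      Nat.mod_eq_of_lt (by omega)]
  · rw [if_neg (by omega), Nat.mod_eq_of_lt (by omega)]
    omega

private lemma cyc_adj (m : ℕ) (u v : Fin (m + 5)) :
    (cycleGraph (m + 5)).Adj u v ↔
      (u.val + 1 = v.val ∨ v.val + 1 = u.val ∨
        (u.val = 0 ∧ v.val = m + 4) ∨ (v.val = 0 ∧ u.val = m + 4)) := by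
  have hu := u.isLt
  have hv := v.isLt
  rw [cycleGraph_adj', Fin.sub_def, Fin.sub_def]
  simp only [Fin.val_mk]
  rw [mod_helper _ _ _ hu hv, mod_helper _ _ _ hv hu]
  split_ifs <;> omega

private lemma mod_cases (n a : ℕ) (h : a < 2 * n) :
    a % n = a ∨ (a % n = a - n ∧ n ≤ a) := by
  rcases lt_or_ge a n with h' | h'
  · exact Or.inl (Nat.mod_eq_of_lt h')
  · right
    rw [Nat.mod_eq_sub_mod h', Nat.mod_eq_of_lt (by omega)]
    omega

theorem compl_odd_cycle_vertex_critical (k : ℕ) (hk : 3 ≤ k) :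
    IsKVertexCritical (cycleGraph (2 * k - 1))ᶜ k ∧
      InducedFree (cycleGraph (2 * k - 1))ᶜ P3P1 ∧
      Fintype.card (Fin (2 * k - 1)) = 2 * k - 1 := by
  obtain ⟨m, hm⟩ : ∃ m, 2 * k - 1 = m + 5 := ⟨2 * k - 6, by omega⟩
  have hm2 : 2 * k = m + 6 := by omega
  rw [hm]
  set G : SimpleGraph (Fin (m + 5)) := (cycleGraph (m + 5))ᶜ with hG
  -- a helper: non-adjacency in the complement of distinct vertices gives cycle adjacency
  have hcompl : ∀ u w : Fin (m + 5), u ≠ w → ¬ G.Adj u w → (cycleGraph (m + 5)).Adj u w := by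
    intro u w hne hadj
    by_contra hc
    exact hadj ((compl_adj _ u w).mpr ⟨hne, hc⟩)
  refine ⟨⟨?_, ?_⟩, ?_, by simp⟩
  · -- chromatic number = k
    -- upper bound coloring
    have hcol : G.Colorable k := by
      refine ⟨Coloring.mk (fun v => ⟨v.val / 2, by omega⟩) ?_⟩
      intro a b hab hfab
      rw [compl_adj] at hab
      obtain ⟨hne, hnadj⟩ := hab
      apply hnadj
      rw [cyc_adj]
      have : a.val / 2 = b.val / 2 := congrArg Fin.val hfab
      have hne' : a.val ≠ b.val := fun h => hne (Fin.ext h)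
      omega
    refine le_antisymm (by exact_mod_cast hcol.chromaticNumber_le) ?_
    rw [chromaticNumber_eq_biInf]
    refine le_iInf₂ fun c hc => ?_
    have key : k ≤ c := by
      obtain ⟨C⟩ := hc
      have fiber : ∀ t : Fin c,
          (Finset.univ.filter fun u : Fin (m + 5) => C u = t).card ≤ 2 := by
        intro t
        by_contra hcard
        rw [not_le, Finset.two_lt_card_iff] at hcard
        obtain ⟨a, b, d, ha, hb, hd, hab, had, hbd⟩ := hcard
        simp only [Finset.mem_filter] at ha hb hd
        have adj : ∀ x y : Fin (m + 5), x ≠ y → C x = C y →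
            (cycleGraph (m + 5)).Adj x y := by
          intro x y hxy hCxy
          refine hcompl x y hxy fun h => C.valid h hCxy
        have h1 := (cyc_adj m a b).mp (adj a b hab (ha.2.trans hb.2.symm))
        have h2 := (cyc_adj m a d).mp (adj a d had (ha.2.trans hd.2.symm))
        have h3 := (cyc_adj m b d).mp (adj b d hbd (hb.2.trans hd.2.symm))
        have hab' : a.val ≠ b.val := fun h => hab (Fin.ext h)
        have had' : a.val ≠ d.val := fun h => had (Fin.ext h)
        have hbd' : b.val ≠ d.val := fun h => hbd (Fin.ext h)
        have := a.isLt; have := b.isLt; have := d.isLt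
        omega
      have hcount : (m + 5 : ℕ) ≤ c * 2 := by
        have := Finset.card_eq_sum_card_fiberwise
          (f := C) (s := Finset.univ) (t := Finset.univ)
          (fun x _ => Finset.mem_univ _)
        have hle : ∑ t : Fin c, (Finset.univ.filter fun u : Fin (m + 5) => C u = t).card
            ≤ ∑ _t : Fin c, 2 := Finset.sum_le_sum fun t _ => fiber t
        simp only [Finset.sum_const, Finset.card_univ, Fintype.card_fin, smul_eq_mul] at hle
        calc (m + 5 : ℕ) = (Finset.univ : Finset (Fin (m + 5))).card := by
              simp
          _ = ∑ t : Fin c, (Finset.univ.filter fun u : Fin (m + 5) => C u = t).card := this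
          _ ≤ c * 2 := hle
      omega
    exact_mod_cast key
  · -- vertex criticality
    intro v
    have hcol : (G.induce ({v}ᶜ : Set (Fin (m + 5)))).Colorable (k - 1) := by
      set c := m + 4 - v.val with hc
      have hq : ∀ u : Fin (m + 5), (u.val + c) % (m + 5) = u.val + c ∨
          ((u.val + c) % (m + 5) = u.val + c - (m + 5) ∧ (m + 5) ≤ u.val + c) :=
        fun u => mod_cases (m + 5) (u.val + c) (by have := u.isLt; have := v.isLt; omega)
      have hqlt : ∀ u : Fin (m + 5), (u.val + c) % (m + 5) < (m + 5) :=
        fun u => Nat.mod_lt _ (by omega)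
      -- vertices other than v have position ≠ n - 1
      have hne : ∀ u : Fin (m + 5), u.val ≠ v.val → (u.val + c) % (m + 5) ≠ m + 4 := by
        intro u huv
        have := u.isLt; have := v.isLt
        rcases hq u with h | ⟨h, h'⟩ <;> omega
      refine ⟨Coloring.mk (fun u => ⟨(u.1.val + c) % (m + 5) / 2, ?_⟩) ?_⟩
      · have h1 := hqlt u.1
        have h2 := hne u.1 (by
          have : u.1 ∈ ({v}ᶜ : Set (Fin (m + 5))) := u.2
          simp only [Set.mem_compl_iff, Set.mem_singleton_iff] at this
          exact fun h => this (Fin.ext h))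
        omega
      · intro a b hab hfab
        have hadj : G.Adj a.1 b.1 := hab
        rw [compl_adj] at hadj
        obtain ⟨hne', hnadj⟩ := hadj
        apply hnadj
        have hfab' : (a.1.val + c) % (m + 5) / 2 = (b.1.val + c) % (m + 5) / 2 :=
          congrArg Fin.val hfab
        have hav : a.1.val ≠ v.val := by
          have : a.1 ∈ ({v}ᶜ : Set (Fin (m + 5))) := a.2
          simp only [Set.mem_compl_iff, Set.mem_singleton_iff] at this
          exact fun h => this (Fin.ext h)
        have hbv : b.1.val ≠ v.val := by
          have : b.1 ∈ ({v}ᶜ : Set (Fin (m + 5))) := b.2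
          simp only [Set.mem_compl_iff, Set.mem_singleton_iff] at this
          exact fun h => this (Fin.ext h)
        have hne2 : a.1.val ≠ b.1.val := fun h => hne' (Fin.ext h)
        have h1 := hq a.1; have h2 := hq b.1
        have h3 := hqlt a.1; have h4 := hqlt b.1
        have h5 := hne a.1 hav; have h6 := hne b.1 hbv
        have := a.1.isLt; have := b.1.isLt
        rw [cyc_adj]
        omega
    calc (G.induce ({v}ᶜ : Set (Fin (m + 5)))).chromaticNumber
        ≤ (k - 1 : ℕ) := hcol.chromaticNumber_le
      _ < (k : ℕ∞) := by exact_mod_cast (by omega : k - 1 < k)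
  · -- P3+P1-free
    intro s
    constructor
    intro e
    set a := e.symm 0 with hA
    set b := e.symm 1 with hB
    set d := e.symm 2 with hD
    set x := e.symm 3 with hX
    have nadj : ∀ i j : Fin 4, ¬ P3P1.Adj i j →
        ¬ G.Adj (e.symm i).1 (e.symm j).1 := by
      intro i j hij h
      exact hij (e.symm.map_adj_iff.mp h)
    have hne : ∀ i j : Fin 4, i ≠ j → (e.symm i).1 ≠ (e.symm j).1 := by
      intro i j hij h
      exact hij (e.symm.injective (Subtype.ext h))
    have key : ∀ i j : Fin 4, i ≠ j → ¬ P3P1.Adj i j →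
        (cycleGraph (m + 5)).Adj (e.symm i).1 (e.symm j).1 := by
      intro i j hij hnadj
      exact hcompl _ _ (hne i j hij) (nadj i j hnadj)
    have h1 := (cyc_adj m _ _).mp (key 0 3 (by decide) (by simp [P3P1, Sym2.eq_iff]))
    have h2 := (cyc_adj m _ _).mp (key 1 3 (by decide) (by simp [P3P1, Sym2.eq_iff]))
    have h3 := (cyc_adj m _ _).mp (key 2 3 (by decide) (by simp [P3P1, Sym2.eq_iff]))
    have hab : (e.symm (0 : Fin 4)).1.val ≠ (e.symm (1 : Fin 4)).1.val :=
      fun h => hne 0 1 (by decide) (Fin.ext h)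
    have had : (e.symm (0 : Fin 4)).1.val ≠ (e.symm (2 : Fin 4)).1.val :=
      fun h => hne 0 2 (by decide) (Fin.ext h)
    have hbd : (e.symm (1 : Fin 4)).1.val ≠ (e.symm (2 : Fin 4)).1.val :=
      fun h => hne 1 2 (by decide) (Fin.ext h)
    have := (e.symm (0 : Fin 4)).1.isLt
    have := (e.symm (1 : Fin 4)).1.isLt
    have := (e.symm (2 : Fin 4)).1.isLt
    have := (e.symm (3 : Fin 4)).1.isLt
    omega
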